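/- Let n ≥ 2 and let f : [0,∞) → (0,∞) be a smooth solution of the ODE f''/f + n (f')²/f² + n/f² = n+1 with initial conditions f'(0) = 0 and f(0) ∈ (√(n/(n+1)), 1]. Then log f is convex, i.e. f''(t) f(t) - f'(t)² ≥ 0 for all t ≥ 0. -/

import Mathlib

set_option maxHeartbeats 1000000 in
theorem stmt_0 (n : ℕ) (hn : 2 ≤ n) (f : ℝ → ℝ)
    (hf : ContDiff ℝ ⊤ f)
    (hpos : ∀ t, 0 ≤ t → 0 < f t)
    (hode : ∀ t, 0 ≤ t →
      deriv (deriv f) t / f t + n * (deriv f t) ^ 2 / (f t) ^ 2 + n / (f t) ^ 2 = n + 1)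
    (hf'0 : deriv f 0 = 0)
    (hf0lo : Real.sqrt (n / (n + 1)) < f 0) (hf0hi : f 0 ≤ 1) :
    ∀ t, 0 ≤ t → 0 ≤ deriv (deriv f) t * f t - (deriv f t) ^ 2 := by
  obtain ⟨k, rfl⟩ : ∃ k, n = k + 2 := ⟨n - 2, by omega⟩
  have hd : Differentiable ℝ f := hf.differentiable (by simp)
  have hd1 : Differentiable ℝ (deriv f) :=
    ((contDiff_infty_iff_deriv.mp (hf.of_le le_top)).2).differentiable (by simp)
  set a := f 0 with ha
  have ha0 : 0 < a := hpos 0 le_rfl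
  have hcast : (((k:ℝ)+2)/((k:ℝ)+3)) = ((k+2:ℕ):ℝ)/(((k+2:ℕ):ℝ)+1) := by push_cast; ring
  have hfrac : (0:ℝ) ≤ ((k:ℝ)+2) / ((k:ℝ)+3) := by positivity
  have hsqrtlt : Real.sqrt (((k:ℝ)+2)/((k:ℝ)+3)) < a := by rw [hcast]; exact hf0lo
  have ha2 : ((k:ℝ)+2) / ((k:ℝ)+3) < a ^ 2 := by
    nlinarith [Real.sq_sqrt hfrac, Real.sqrt_nonneg (((k:ℝ)+2) / ((k:ℝ)+3)), hsqrtlt]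
  -- cleared ODE
  have hODE : ∀ t, 0 ≤ t → deriv (deriv f) t * f t
      = ((k:ℝ)+3) * f t ^ 2 - ((k:ℝ)+2) * (deriv f t) ^ 2 - ((k:ℝ)+2) := by
    intro t ht
    have h := hode t ht
    have hft : f t ≠ 0 := (hpos t ht).ne'
    field_simp at h
    push_cast at h
    have h2 : (deriv (deriv f) t * f t
        - (((k:ℝ)+3) * f t ^ 2 - ((k:ℝ)+2) * (deriv f t) ^ 2 - ((k:ℝ)+2))) * f t ^ 3 = 0 := by
      linear_combination f t ^ 3 * h
    rcases mul_eq_zero.mp h2 with h3 | h3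
    · linarith
    · exact absurd (pow_eq_zero_iff (by norm_num)|>.mp h3) hft
  -- conserved quantity
  set c : ℝ → ℝ := fun s => (1 + (deriv f s) ^ 2 - (f s) ^ 2) * (f s) ^ (2*k+4) with hc
  have hcder : ∀ t, 0 ≤ t → HasDerivAt c 0 t := by
    intro t ht
    have hft : HasDerivAt f (deriv f t) t := (hd t).hasDerivAt
    have hgt : HasDerivAt (deriv f) (deriv (deriv f) t) t := (hd1 t).hasDerivAt
    have h3 := (((hasDerivAt_const t (1:ℝ)).add (hgt.pow 2)).sub (hft.pow 2)).mul
      (hft.pow (2*k+4))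
    have hft0 : f t ≠ 0 := (hpos t ht).ne'
    have hkey : (0 + ((2:ℕ):ℝ) * deriv f t ^ (2-1) * deriv (deriv f) t
          - ((2:ℕ):ℝ) * f t ^ (2-1) * deriv f t) * f t ^ (2*k+4)
        + (1 + deriv f t ^ 2 - f t ^ 2) * (((2*k+4:ℕ):ℝ) * f t ^ (2*k+4-1) * deriv f t)
        = 0 := by
      rw [show (2*k+4-1 : ℕ) = 2*k+3 from by omega, show (2-1 : ℕ) = 1 from by norm_num]
      refine (mul_eq_zero.mp ?_).resolve_right hft0
      push_cast
      linear_combination (2 * deriv f t * f t ^ (2*k+4)) * hODE t ht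
    rw [show (((fun _ => (1:ℝ)) + deriv f ^ 2 - f ^ 2) * f ^ (2*k+4)) = c from by rw [hc]; rfl] at h3
    exact h3.congr_deriv hkey
  have hccont : Continuous c := by
    have h1 : Continuous (deriv f) := hd1.continuous
    have h2 : Continuous f := hd.continuous
    rw [hc]; fun_prop
  have hconst : ∀ t, 0 ≤ t → c t = c 0 := by
    intro t ht
    exact constant_of_has_deriv_right_zero (hccont.continuousOn)
      (fun x hx => ((hcder x hx.1).hasDerivWithinAt)) t ⟨ht, le_rfl⟩
  have hc0 : c 0 = (1 - a ^ 2) * a ^ (2*k+4) := by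
    simp only [hc, ← ha, hf'0]
    ring
  -- strict antitonicity of (1-s)*s^(k+2) on [(k+2)/(k+3), 1]
  have hanti : StrictAntiOn (fun s : ℝ => (1 - s) * s ^ (k+2))
      (Set.Icc (((k:ℝ)+2)/((k:ℝ)+3)) 1) := by
    apply strictAntiOn_of_deriv_neg (convex_Icc _ _)
    · fun_prop
    · intro s hs
      rw [interior_Icc] at hs
      have hs0 : 0 < s := lt_of_le_of_lt (by positivity) hs.1
      have hD : HasDerivAt (fun s : ℝ => (1 - s) * s ^ (k+2))
          ((0 - 1) * s ^ (k+2) + (1 - s) * (((k+2:ℕ):ℝ) * s ^ (k+2-1) * 1)) s :=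
        (((hasDerivAt_const s (1:ℝ)).sub (hasDerivAt_id s)).mul ((hasDerivAt_id s).pow (k+2)))
      rw [hD.deriv, show (k+2-1 : ℕ) = k+1 from by omega]
      have hks : ((k:ℝ)+2) < ((k:ℝ)+3) * s := by
        have h1 := hs.1
        rw [div_lt_iff₀ (by positivity)] at h1
        linarith
      have hsp : (0:ℝ) < s ^ (k+1) := by positivity
      have hps : s ^ (k+2) = s ^ (k+1) * s := pow_succ s (k+1)
      have hprod : (0:ℝ) < s ^ (k+1) * (((k:ℝ)+3) * s - (((k:ℝ)+2))) :=
        mul_pos hsp (by linarith)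
      push_cast
      nlinarith [hprod, hps]
  -- barrier: f t ≥ a for all t ≥ 0
  have hge : ∀ t, 0 ≤ t → a ≤ f t := by
    intro t ht
    by_contra hlt
    push_neg at hlt
    set x₀ : ℝ := Real.sqrt (((k:ℝ)+2)/((k:ℝ)+3)) with hx₀
    have hx₀0 : 0 < x₀ := Real.sqrt_pos.mpr (by positivity)
    have hx₀sq : x₀ ^ 2 = ((k:ℝ)+2)/((k:ℝ)+3) := Real.sq_sqrt hfrac
    have hx₀a : x₀ < a := hsqrtlt
    have ha2le : a ^ 2 ≤ 1 := by nlinarith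
    have hmain : ∀ s, 0 ≤ s → x₀ ≤ f s → f s < a → False := by
      intro s hs hge1 hlt1
      have hx2 : ((k:ℝ)+2)/((k:ℝ)+3) ≤ f s ^ 2 := by
        rw [← hx₀sq]; exact pow_le_pow_left₀ hx₀0.le hge1 2
      have hxa2 : f s ^ 2 < a ^ 2 := by nlinarith [hx₀0, hge1, hlt1]
      have hstrict : (1 - a ^ 2) * (a ^ 2) ^ (k+2) < (1 - f s ^ 2) * (f s ^ 2) ^ (k+2) :=
        hanti ⟨hx2, by nlinarith⟩ ⟨ha2.le, ha2le⟩ hxa2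
      have hcs := (hconst s hs).trans hc0
      simp only [hc] at hcs
      have hpow : (a ^ 2) ^ (k+2) = a ^ (2*k+4) := by
        rw [← pow_mul, show 2*(k+2) = 2*k+4 from by ring]
      have hpow2 : (f s ^ 2) ^ (k+2) = f s ^ (2*k+4) := by
        rw [← pow_mul, show 2*(k+2) = 2*k+4 from by ring]
      rw [hpow, hpow2] at hstrict
      have hsq : 0 ≤ (deriv f s) ^ 2 * f s ^ (2*k+4) :=
        mul_nonneg (sq_nonneg _) (pow_nonneg (hpos s hs).le _)
      nlinarith [hsq, hstrict, hcs]
    rcases le_or_gt x₀ (f t) with hcase | hcase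
    · exact hmain t ht hcase hlt
    · obtain ⟨s, hsmem, hfs⟩ := intermediate_value_Icc' ht (hd.continuous.continuousOn)
        ⟨hcase.le, hx₀a.le⟩
      exact hmain s hsmem.1 (le_of_eq hfs.symm) (by rw [hfs]; exact hx₀a)
  -- conclusion
  intro t ht
  have hcs := (hconst t ht).trans hc0
  simp only [hc] at hcs
  have hODEt := hODE t ht
  have hfa : a ^ (2*k+4) ≤ f t ^ (2*k+4) := pow_le_pow_left₀ ha0.le (hge t ht) _
  have hap : (0:ℝ) < a ^ (2*k+4) := pow_pos ha0 _
  have hfp : (0:ℝ) < f t ^ (2*k+4) := pow_pos (hpos t ht) _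
  have h1 : ((k:ℝ)+3) * (1 - a ^ 2) < 1 := by
    have h2 := ha2
    rw [div_lt_iff₀ (by positivity)] at h2
    nlinarith
  have hprod : (0:ℝ) < (1 - ((k:ℝ)+3) * (1 - a ^ 2)) * a ^ (2*k+4) :=
    mul_pos (by linarith) hap
  have hbound : ((k:ℝ)+3) * (1 - a ^ 2) * a ^ (2*k+4) < f t ^ (2*k+4) := by nlinarith
  have hEq : (deriv (deriv f) t * f t - (deriv f t) ^ 2) * f t ^ (2*k+4)
      = f t ^ (2*k+4) - ((k:ℝ)+3) * ((1 - a ^ 2) * a ^ (2*k+4)) := by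
    linear_combination (f t ^ (2*k+4)) * hODEt - ((k:ℝ)+3) * hcs
  have hX : 0 ≤ (deriv (deriv f) t * f t - (deriv f t) ^ 2) * f t ^ (2*k+4) := by
    rw [hEq]; nlinarith [hbound]
  exact (mul_nonneg_iff_of_pos_right hfp).mp hX
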